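/- arXiv:1405.5113 — 4 statements merged into one kernel-verified Lean document; each statement's English description precedes it below -/
import Mathlib

section
/- Let B be a real m×m matrix and A, a diagonalizable m×m matrix (more generally any matrix), with tA and tB not necessarily commuting. Then for all t ≥ 0, the matrix exponential satisfies the Duhamel-type commutator identity: exp(t(A+B)) = exp(tB)·exp(tA) − ∫₀ᵗ exp((t−s)(A+B))·(exp(sB)·A − A·exp(sB))·exp(sA) ds. -/
open MeasureTheory intervalIntegral

section LocalNorm
attribute [local instance] Matrix.linftyOpNormedRing Matrix.linftyOpNormedAlgebra

theorem duhamel_commutator_matrix_exp (m : ℕ) (A B : Matrix (Fin m) (Fin m) ℝ)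
    (t : ℝ) (ht : 0 ≤ t) :
    NormedSpace.exp (t • (A + B)) =
      NormedSpace.exp (t • B) * NormedSpace.exp (t • A) -
        Matrix.of (fun i j =>
          ∫ s in (0:ℝ)..t,
            ((NormedSpace.exp ((t - s) • (A + B)) *
                (NormedSpace.exp (s • B) * A - A * NormedSpace.exp (s • B)) *
                NormedSpace.exp (s • A)) i j)) := by
  set C := A + B with hC
  set g : ℝ → Matrix (Fin m) (Fin m) ℝ := fun s =>
    NormedSpace.exp ((t - s) • C) * NormedSpace.exp (s • B) *
      NormedSpace.exp (s • A) with hg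
  set g' : ℝ → Matrix (Fin m) (Fin m) ℝ := fun s =>
    NormedSpace.exp ((t - s) • C) *
      (NormedSpace.exp (s • B) * A - A * NormedSpace.exp (s • B)) *
      NormedSpace.exp (s • A) with hg'
  have hderiv : ∀ s : ℝ, HasDerivAt g (g' s) s := by
    intro s
    have h1 : HasDerivAt (fun s : ℝ => NormedSpace.exp ((t - s) • C))
        (-(C * NormedSpace.exp ((t - s) • C))) s := by
      have hf : HasDerivAt (fun s : ℝ => t - s) (-1) s :=
        (hasDerivAt_id s).const_sub t
      have := (hasDerivAt_exp_smul_const' (𝕂 := ℝ) C (t - s)).scomp s hf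
      simp only [neg_one_smul, Function.comp_def] at this; exact this
    have h2 : HasDerivAt (fun s : ℝ => NormedSpace.exp (s • B))
        (B * NormedSpace.exp (s • B)) s :=
      hasDerivAt_exp_smul_const' (𝕂 := ℝ) B s
    have h3 : HasDerivAt (fun s : ℝ => NormedSpace.exp (s • A))
        (NormedSpace.exp (s • A) * A) s :=
      hasDerivAt_exp_smul_const (𝕂 := ℝ) A s
    have h4 := (h1.mul h2).mul h3
    refine h4.congr_deriv (Eq.symm ?_)
    set E := NormedSpace.exp ((t - s) • C) with hE
    set F := NormedSpace.exp (s • B) with hF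
    set G := NormedSpace.exp (s • A) with hG
    have hGA : G * A = A * G :=
      (((Commute.refl A).smul_left s).exp_left).eq
    have hEC : E * C = C * E :=
      (((Commute.refl C).smul_left (t - s)).exp_left).eq
    show E * (F * A - A * F) * G =
      (-(C * E) * F + E * (B * F)) * G + E * F * (G * A)
    rw [hGA, hC] at *
    rw [← hEC]
    noncomm_ring
  have hcont : Continuous g' := by
    have hA : Continuous fun s : ℝ => NormedSpace.exp (s • A) :=
      NormedSpace.exp_continuous.comp (continuous_id.smul continuous_const)
    have hB : Continuous fun s : ℝ => NormedSpace.exp (s • B) :=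
      NormedSpace.exp_continuous.comp (continuous_id.smul continuous_const)
    have hCc : Continuous fun s : ℝ => NormedSpace.exp ((t - s) • C) :=
      NormedSpace.exp_continuous.comp (((continuous_const.sub continuous_id).smul
        continuous_const))
    exact (hCc.mul ((hB.mul continuous_const).sub (continuous_const.mul hB))).mul hA
  ext i j
  let L : Matrix (Fin m) (Fin m) ℝ →ₗ[ℝ] ℝ :=
    { toFun := fun M => M i j, map_add' := fun _ _ => rfl, map_smul' := fun _ _ => rfl }
  let Lc : Matrix (Fin m) (Fin m) ℝ →L[ℝ] ℝ := LinearMap.toContinuousLinearMap L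
  have hLc : ∀ M : Matrix (Fin m) (Fin m) ℝ, Lc M = M i j := fun _ => rfl
  have hde : ∀ s ∈ Set.uIcc (0:ℝ) t,
      HasDerivAt (fun s => (g s) i j) ((g' s) i j) s := by
    intro s _
    have := Lc.hasFDerivAt.comp_hasDerivAt s (hderiv s)
    simp only [hLc, Function.comp_def] at this; exact this
  have hint : IntervalIntegrable (fun s => (g' s) i j) volume 0 t :=
    ((Lc.continuous.comp hcont).intervalIntegrable 0 t)
  have hftc := intervalIntegral.integral_eq_sub_of_hasDerivAt hde hint
  have hg0 : g 0 = NormedSpace.exp (t • C) := by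
    simp [hg, NormedSpace.exp_zero]
  have hgt : g t = NormedSpace.exp (t • B) * NormedSpace.exp (t • A) := by
    simp [hg, NormedSpace.exp_zero]
  rw [hg0, hgt] at hftc
  simp only [Matrix.sub_apply, Matrix.of_apply]
  rw [hftc]
  ring

end LocalNorm

example (m : ℕ) (A B : Matrix (Fin m) (Fin m) ℝ)
    (t : ℝ) (ht : 0 ≤ t) :
    NormedSpace.exp (t • (A + B)) =
      NormedSpace.exp (t • B) * NormedSpace.exp (t • A) -
        Matrix.of (fun i j =>
          ∫ s in (0:ℝ)..t,
            ((NormedSpace.exp ((t - s) • (A + B)) *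
                (NormedSpace.exp (s • B) * A - A * NormedSpace.exp (s • B)) *
                NormedSpace.exp (s • A)) i j)) :=
  duhamel_commutator_matrix_exp m A B t ht
end

section
/- Let B be an m×m real matrix with all off-diagonal entries nonnegative, and let u : [0,T] → ℝᵐ be differentiable with u'(t) = B u(t) for all t and u(0) ≤ 0 componentwise. Then u(t) ≤ 0 componentwise for all t ∈ [0,T]. -/
open NormedSpace Set

attribute [local instance] Matrix.linftyOpNormedRing Matrix.linftyOpNormedAlgebra
  Matrix.linftyOpNormedSpace

namespace CoopAux

variable {m : ℕ}

lemma pow_entries_nonneg {A : Matrix (Fin m) (Fin m) ℝ} (hA : ∀ i j, 0 ≤ A i j) (n : ℕ) :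
    ∀ i j, 0 ≤ (A ^ n) i j := by
  induction n with
  | zero =>
      intro i j
      rw [pow_zero]
      by_cases h : i = j <;> simp [Matrix.one_apply, h]
  | succ n ih =>
      intro i j
      rw [pow_succ, Matrix.mul_apply]
      exact Finset.sum_nonneg fun k _ => mul_nonneg (ih i k) (hA k j)

lemma exp_entries_nonneg {A : Matrix (Fin m) (Fin m) ℝ} (hA : ∀ i j, 0 ≤ A i j) (i j : Fin m) :
    0 ≤ (exp A) i j := by
  rw [exp_eq_tsum ℝ]
  have hs : Summable fun n : ℕ => ((n.factorial : ℝ)⁻¹) • A ^ n := expSeries_summable' (𝕂 := ℝ) A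
  let L : Matrix (Fin m) (Fin m) ℝ →L[ℝ] ℝ :=
    LinearMap.toContinuousLinearMap (Matrix.entryLinearMap ℝ ℝ i j)
  have hL : ∀ M : Matrix (Fin m) (Fin m) ℝ, L M = M i j := fun _ => rfl
  have h1 : (∑' n : ℕ, ((n.factorial : ℝ)⁻¹) • A ^ n) i j
      = ∑' n : ℕ, ((n.factorial : ℝ)⁻¹) • (A ^ n) i j := by
    have := L.map_tsum hs
    simpa [hL] using this
  show 0 ≤ (∑' n : ℕ, ((n.factorial : ℝ)⁻¹) • A ^ n) i j
  rw [h1]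
  exact tsum_nonneg fun n =>
    smul_nonneg (by positivity) (pow_entries_nonneg hA n i j)

lemma exp_smul_one (r : ℝ) :
    exp (r • (1 : Matrix (Fin m) (Fin m) ℝ)) = Real.exp r • 1 := by
  have h := algebraMap_exp_comm (𝕂 := ℝ) (𝔸 := Matrix (Fin m) (Fin m) ℝ) r
  rw [Algebra.algebraMap_eq_smul_one, Algebra.algebraMap_eq_smul_one] at h
  rw [Real.exp_eq_exp_ℝ]
  exact h.symm

/-- entries of `exp (t • B)` are nonnegative for `t ≥ 0` and `B` Metzler. -/
lemma exp_smul_entries_nonneg {B : Matrix (Fin m) (Fin m) ℝ}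
    (hB : ∀ i j, i ≠ j → 0 ≤ B i j) {t : ℝ} (ht : 0 ≤ t) (i j : Fin m) :
    0 ≤ (exp (t • B)) i j := by
  set c : ℝ := ∑ k, |B k k| with hc
  have hc0 : ∀ i : Fin m, |B i i| ≤ c :=
    fun i => Finset.single_le_sum (f := fun k => |B k k|)
      (fun k _ => abs_nonneg _) (Finset.mem_univ i)
  set A : Matrix (Fin m) (Fin m) ℝ := B + c • 1 with hA
  have hAnn : ∀ i j, 0 ≤ A i j := by
    intro i j
    by_cases h : i = j
    · subst h
      simp only [hA, Matrix.add_apply, Matrix.smul_apply, Matrix.one_apply_eq, smul_eq_mul,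
        mul_one]
      have := hc0 i
      have := abs_le.mp (le_refl |B i i|) |>.1
      nlinarith [abs_nonneg (B i i), neg_abs_le (B i i)]
    · simpa [hA, Matrix.one_apply, h] using hB i j h
  have hsplit : t • B = t • A + (-(t * c)) • (1 : Matrix (Fin m) (Fin m) ℝ) := by
    rw [hA]
    module
  have hcomm : Commute (t • A) ((-(t * c)) • (1 : Matrix (Fin m) (Fin m) ℝ)) :=
    ((Commute.one_right (t • A)).smul_right _)
  have hexp : exp (t • B) = exp (t • A) * (Real.exp (-(t * c)) • 1) := by
    rw [hsplit, Matrix.exp_add_of_commute _ _ hcomm, exp_smul_one]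
  rw [hexp]
  have : (exp (t • A) * (Real.exp (-(t * c)) • 1)) = Real.exp (-(t * c)) • exp (t • A) := by
    rw [mul_smul_comm, mul_one]
  rw [this, Matrix.smul_apply, smul_eq_mul]
  have hentry : 0 ≤ (exp (t • A)) i j :=
    exp_entries_nonneg (fun i j => by
      simpa [Matrix.smul_apply] using mul_nonneg ht (hAnn i j)) i j
  exact mul_nonneg (Real.exp_pos _).le hentry

end CoopAux

theorem cooperative_linear_comparison (m : ℕ) (T : ℝ) (hT : 0 ≤ T)
    (B : Matrix (Fin m) (Fin m) ℝ) (hB : ∀ i j, i ≠ j → 0 ≤ B i j)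
    (u : ℝ → (Fin m → ℝ))
    (hu : ∀ t ∈ Set.Icc (0:ℝ) T, HasDerivAt u (B.mulVec (u t)) t)
    (h0 : ∀ i, u 0 i ≤ 0) :
    ∀ t ∈ Set.Icc (0:ℝ) T, ∀ i, u t i ≤ 0 := by
  classical
  -- the candidate solution via the matrix exponential
  set g : ℝ → Fin m → ℝ := fun t => (exp (t • B)).mulVec (u 0) with hg
  -- the linear map `M ↦ M.mulVec (u 0)` as a continuous linear map
  let L : Matrix (Fin m) (Fin m) ℝ →L[ℝ] (Fin m → ℝ) :=
    LinearMap.toContinuousLinearMap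
      { toFun := fun M => M.mulVec (u 0)
        map_add' := fun M N => Matrix.add_mulVec M N (u 0)
        map_smul' := fun r M => Matrix.smul_mulVec r M (u 0) }
  have hLapp : ∀ M : Matrix (Fin m) (Fin m) ℝ, L M = M.mulVec (u 0) := fun _ => rfl
  have hg' : ∀ t : ℝ, HasDerivAt g (B.mulVec (g t)) t := by
    intro t
    have h1 : HasDerivAt (fun s : ℝ => exp (s • B)) (B * exp (t • B)) t :=
      hasDerivAt_exp_smul_const' B t
    have h2 : HasDerivAt (fun s : ℝ => L (exp (s • B))) (L (B * exp (t • B))) t :=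
      L.hasFDerivAt.comp_hasDerivAt t h1
    have h3 : L (B * exp (t • B)) = B.mulVec (g t) := by
      rw [hLapp, hg, ← Matrix.mulVec_mulVec]
    simpa [hLapp, hg, h3] using h2
  -- the Lipschitz vector field
  let V : (Fin m → ℝ) →L[ℝ] (Fin m → ℝ) := LinearMap.toContinuousLinearMap B.mulVecLin
  have hV : ∀ x : Fin m → ℝ, V x = B.mulVec x := fun _ => rfl
  have huniq : Set.EqOn u g (Set.Icc 0 T) := by
    apply ODE_solution_unique (v := fun _ x => B.mulVec x) (K := ‖V‖₊)
    · intro _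
      have := V.lipschitz
      exact this
    · intro t ht
      exact ((hu t ht).continuousAt).continuousWithinAt
    · intro t ht
      exact (hu t (Set.mem_Icc.mpr ⟨ht.1, ht.2.le⟩)).hasDerivWithinAt
    · intro t _
      exact ((hg' t).continuousAt).continuousWithinAt
    · intro t _
      exact (hg' t).hasDerivWithinAt
    · simp [hg]
  intro t ht i
  rw [huniq ht, hg]
  simp only [Matrix.mulVec, dotProduct]
  apply Finset.sum_nonpos
  intro j _
  exact mul_nonpos_of_nonneg_of_nonpos
    (CoopAux.exp_smul_entries_nonneg hB ht.1 i j) (h0 j)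
end

section
/- Let m ≥ 1, let α₁ ≥ α₂ ≥ … ≥ α_m with α_i ∈ (0,1], let B be a real m×m matrix, and for z ∈ ℂ with 0 ≤ arg(z) < π/(4α₁) let A(z) = diag(−z^{2α₁}, …, −z^{2α_m}) (principal branch powers). Then for every t ≥ 0, the operator norm satisfies ‖exp(t(A(z)+B))‖ ≤ e^{(‖B‖ − |z|^{2α₁} cos(2α₁ arg z)) t} + e^{(‖B‖ − |z|^{2α_m} cos(2α₁ arg z)) t}. -/
open scoped Matrix.Norms.L2Operator
open NormedSpace Matrix

section Aux

lemma aux_conj_mul_re (d w : ℂ) : ((starRingEnd ℂ) (d * w) * w).re = d.re * ‖w‖ ^ 2 := by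
  simp [Complex.mul_re, Complex.mul_im, Complex.conj_re, Complex.conj_im,
    Complex.sq_norm, Complex.normSq_apply]
  ring

lemma norm_exp_apply_le {E : Type*} [NormedAddCommGroup E] [InnerProductSpace ℂ E]
    [CompleteSpace E] (T : E →L[ℂ] E) (μ : ℝ)
    (hT : ∀ x : E, (inner ℂ (T x) x : ℂ).re ≤ μ * ‖x‖ ^ 2) (t : ℝ) (ht : 0 ≤ t) :
    ‖exp (t • T)‖ ≤ Real.exp (μ * t) := by
  apply ContinuousLinearMap.opNorm_le_bound _ (Real.exp_nonneg _)
  intro x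
  set f : ℝ → E := fun s => exp (s • T) x with hf
  have hfd : ∀ s : ℝ, HasDerivAt f (T (f s)) s := by
    intro s
    have h1 := hasDerivAt_exp_smul_const' (𝕂 := ℝ) T s
    have h2 := ((ContinuousLinearMap.apply ℂ E x).restrictScalars
      ℝ).hasFDerivAt.comp_hasDerivAt s h1
    simpa only [ContinuousLinearMap.coe_restrictScalars', Function.comp_def,
      ContinuousLinearMap.apply_apply, ContinuousLinearMap.mul_apply] using h2
  set g : ℝ → ℝ := fun s => ‖f s‖ ^ 2 with hg
  have hgd : ∀ s : ℝ, HasDerivAt g (2 * (inner ℂ (T (f s)) (f s) : ℂ).re) s := by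
    intro s
    have hi : HasDerivAt (fun u => (inner ℂ (f u) (f u) : ℂ))
        (inner ℂ (f s) (T (f s)) + inner ℂ (T (f s)) (f s)) s :=
      (hfd s).inner ℂ (hfd s)
    have hre := (Complex.reCLM.hasFDerivAt.comp_hasDerivAt s hi)
    have heq : ∀ u, Complex.reCLM ((inner ℂ (f u) (f u) : ℂ)) = g u := by
      intro u
      simp only [Complex.reCLM_apply, hg]
      exact inner_self_eq_norm_sq (𝕜 := ℂ) (f u)
    rw [show (2 * (inner ℂ (T (f s)) (f s) : ℂ).re)
        = Complex.reCLM ((inner ℂ (f s) (T (f s))) + inner ℂ (T (f s)) (f s) : ℂ) by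
      have hc : (inner ℂ (f s) (T (f s)) : ℂ) = starRingEnd ℂ (inner ℂ (T (f s)) (f s)) :=
        (inner_conj_symm (𝕜 := ℂ) (f s) (T (f s))).symm
      simp only [Complex.reCLM_apply, Complex.add_re, hc, Complex.conj_re]; ring]
    exact (funext heq) ▸ hre
  set h : ℝ → ℝ := fun s => Real.exp (-(2 * μ) * s) * g s with hh
  have hhd : ∀ s : ℝ, HasDerivAt h
      (Real.exp (-(2 * μ) * s) * (-(2 * μ)) * g s
        + Real.exp (-(2 * μ) * s) * (2 * (inner ℂ (T (f s)) (f s) : ℂ).re)) s := by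
    intro s
    have e1 : HasDerivAt (fun u : ℝ => Real.exp (-(2 * μ) * u))
        (Real.exp (-(2 * μ) * s) * (-(2 * μ))) s := by
      simpa using ((hasDerivAt_id s).const_mul (-(2 * μ))).exp
    exact e1.mul (hgd s)
  have hanti : Antitone h := by
    apply antitone_of_deriv_nonpos
    · exact fun s => ((hhd s).differentiableAt)
    · intro s
      rw [(hhd s).deriv]
      have h1 : (inner ℂ (T (f s)) (f s) : ℂ).re ≤ μ * ‖f s‖ ^ 2 := hT (f s)
      have h2 : (0:ℝ) < Real.exp (-(2 * μ) * s) := Real.exp_pos _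
      have hgs : g s = ‖f s‖ ^ 2 := rfl
      rw [hgs]
      nlinarith [mul_le_mul_of_nonneg_left h1 (le_of_lt h2)]
  have hht := hanti ht
  have hh0 : h 0 = ‖x‖ ^ 2 := by
    simp [hh, hg, hf, zero_smul, exp_zero]
  rw [hh0] at hht
  have key : ‖f t‖ ^ 2 ≤ Real.exp (2 * μ * t) * ‖x‖ ^ 2 := by
    have h3 := mul_le_mul_of_nonneg_left hht (Real.exp_nonneg (2 * μ * t))
    calc ‖f t‖ ^ 2 = Real.exp (2 * μ * t) * (Real.exp (-(2 * μ) * t) * g t) := by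
          rw [← mul_assoc, ← Real.exp_add,
            show 2 * μ * t + -(2 * μ) * t = 0 by ring, Real.exp_zero, one_mul]
      _ ≤ Real.exp (2 * μ * t) * ‖x‖ ^ 2 := h3
  have key2 : ‖f t‖ ^ 2 ≤ (Real.exp (μ * t) * ‖x‖) ^ 2 := by
    have : (Real.exp (μ * t) * ‖x‖) ^ 2 = Real.exp (2 * μ * t) * ‖x‖ ^ 2 := by
      rw [mul_pow, sq (Real.exp (μ * t)), ← Real.exp_add]
      ring_nf
    rw [this]; exact key
  have hs := Real.sqrt_le_sqrt key2
  rw [Real.sqrt_sq (norm_nonneg _), Real.sqrt_sq (by positivity)] at hs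
  exact hs


lemma aux_norm_sq_eq {n : Type*} [Fintype n] {𝕜 : Type*} [RCLike 𝕜]
    (x : EuclideanSpace 𝕜 n) : ‖x‖ ^ 2 = ∑ i, ‖x i‖ ^ 2 := by
  rw [EuclideanSpace.norm_eq, Real.sq_sqrt (by positivity)]

lemma aux_mulVec_ofReal {m : ℕ} (B : Matrix (Fin m) (Fin m) ℝ)
    (x : EuclideanSpace ℂ (Fin m)) :
    ‖Matrix.toEuclideanCLM (𝕜 := ℂ) (B.map Complex.ofReal) x‖ ≤ ‖B‖ * ‖x‖ := by
  set u : EuclideanSpace ℝ (Fin m) := WithLp.toLp 2 (fun j => (x j).re) with hu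
  set v : EuclideanSpace ℝ (Fin m) := WithLp.toLp 2 (fun j => (x j).im) with hv
  have hre : ∀ i, ((Matrix.toEuclideanCLM (𝕜 := ℂ) (B.map Complex.ofReal) x) i).re
      = (B *ᵥ (u : Fin m → ℝ)) i := by
    intro i
    show ((B.map Complex.ofReal *ᵥ (x : Fin m → ℂ)) i).re = _
    simp [hu, Matrix.mulVec, dotProduct, Complex.re_sum, Matrix.map_apply]
  have him : ∀ i, ((Matrix.toEuclideanCLM (𝕜 := ℂ) (B.map Complex.ofReal) x) i).im
      = (B *ᵥ (v : Fin m → ℝ)) i := by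
    intro i
    show ((B.map Complex.ofReal *ᵥ (x : Fin m → ℂ)) i).im = _
    simp [hv, Matrix.mulVec, dotProduct, Complex.im_sum, Matrix.map_apply]
  have hBu : ‖(EuclideanSpace.equiv (Fin m) ℝ).symm (B *ᵥ (u : Fin m → ℝ))‖ ≤ ‖B‖ * ‖u‖ :=
    Matrix.l2_opNorm_mulVec B u
  have hBv : ‖(EuclideanSpace.equiv (Fin m) ℝ).symm (B *ᵥ (v : Fin m → ℝ))‖ ≤ ‖B‖ * ‖v‖ :=
    Matrix.l2_opNorm_mulVec B v
  have hx2 : ‖x‖ ^ 2 = ‖u‖ ^ 2 + ‖v‖ ^ 2 := by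
    rw [aux_norm_sq_eq, aux_norm_sq_eq, aux_norm_sq_eq, ← Finset.sum_add_distrib]
    refine Finset.sum_congr rfl fun j _ => ?_
    simp [hu, hv, Complex.sq_norm, Complex.normSq_apply,
      Real.norm_eq_abs, sq_abs]
    ring
  have hsq : ‖Matrix.toEuclideanCLM (𝕜 := ℂ) (B.map Complex.ofReal) x‖ ^ 2
      ≤ (‖B‖ * ‖x‖) ^ 2 := by
    rw [aux_norm_sq_eq]
    have : ∑ i, ‖(Matrix.toEuclideanCLM (𝕜 := ℂ) (B.map Complex.ofReal) x) i‖ ^ 2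
        = ‖(EuclideanSpace.equiv (Fin m) ℝ).symm (B *ᵥ (u : Fin m → ℝ))‖ ^ 2
          + ‖(EuclideanSpace.equiv (Fin m) ℝ).symm (B *ᵥ (v : Fin m → ℝ))‖ ^ 2 := by
      rw [aux_norm_sq_eq, aux_norm_sq_eq, ← Finset.sum_add_distrib]
      refine Finset.sum_congr rfl fun i _ => ?_
      have e1 : ((EuclideanSpace.equiv (Fin m) ℝ).symm (B *ᵥ (u : Fin m → ℝ))) i
          = (B *ᵥ (u : Fin m → ℝ)) i := rfl
      have e2 : ((EuclideanSpace.equiv (Fin m) ℝ).symm (B *ᵥ (v : Fin m → ℝ))) i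
          = (B *ᵥ (v : Fin m → ℝ)) i := rfl
      rw [e1, e2, ← hre i, ← him i]
      simp [Complex.sq_norm, Complex.normSq_apply,
        Real.norm_eq_abs, sq_abs]
      ring
    rw [this]
    have h1 := pow_le_pow_left₀ (norm_nonneg _) hBu 2
    have h2 := pow_le_pow_left₀ (norm_nonneg _) hBv 2
    rw [mul_pow] at h1 h2 ⊢
    rw [hx2, mul_add]
    linarith
  have := Real.sqrt_le_sqrt hsq
  rwa [Real.sqrt_sq (norm_nonneg _), Real.sqrt_sq (by positivity)] at this


lemma aux_re_cpow (z : ℂ) (hz : z ≠ 0) (r : ℝ) :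
    (z ^ (r : ℂ)).re = ‖z‖ ^ r * Real.cos (r * z.arg) := by
  rw [Complex.cpow_def_of_ne_zero hz, Complex.exp_re]
  have h1 : (Complex.log z * (r : ℂ)).re = Real.log (‖z‖) * r := by
    simp [Complex.mul_re, Complex.log_re]
  have h2 : (Complex.log z * (r : ℂ)).im = z.arg * r := by
    simp [Complex.mul_im, Complex.log_im]
  rw [h1, h2, Real.rpow_def_of_pos (norm_pos_iff.mpr hz), mul_comm z.arg r]

set_option synthInstance.maxHeartbeats 1000000 in
lemma aux_norm_transfer {m : ℕ} (M : Matrix (Fin m) (Fin m) ℂ) (t : ℝ) :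
    ‖exp (t • M)‖ = ‖exp (t • Matrix.toEuclideanCLM (𝕜 := ℂ) M)‖ := by
  rw [Matrix.cstar_norm_def]
  congr 1
  have hc : Continuous (Matrix.toEuclideanCLM (n := Fin m) (𝕜 := ℂ)) := by
    refine AddMonoidHomClass.isometry_of_norm _ (fun a => ?_) |>.continuous
    exact (Matrix.cstar_norm_def a).symm
  let +nondep : NormedAlgebra ℚ (Matrix (Fin m) (Fin m) ℂ) := .restrictScalars ℚ ℂ _
  rw [map_exp (Matrix.toEuclideanCLM (n := Fin m) (𝕜 := ℂ)) hc]
  congr 1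
  rw [show t • M = ((t : ℂ)) • M by rw [show ((t:ℂ)) = t • (1:ℂ) by simp, smul_assoc, one_smul]]
  rw [_root_.map_smul]
  ext x i
  simp [ContinuousLinearMap.smul_apply, PiLp.smul_apply, Complex.real_smul, smul_eq_mul]

end Aux

theorem semigroup_norm_estimate (m : ℕ) (hm : 0 < m) (α : Fin m → ℝ)
    (hα : ∀ i, α i ∈ Set.Ioc (0:ℝ) 1)
    (hmono : ∀ i j : Fin m, i ≤ j → α j ≤ α i)
    (B : Matrix (Fin m) (Fin m) ℝ) (z : ℂ) (hz : 0 ≤ z.arg)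
    (hz' : z.arg < Real.pi / (4 * α ⟨0, hm⟩)) (t : ℝ) (ht : 0 ≤ t) :
    ‖NormedSpace.exp
        (t • (Matrix.diagonal (fun i => -z ^ (((2 * α i : ℝ)) : ℂ)) +
          B.map Complex.ofReal))‖ ≤
      Real.exp ((‖B‖ - ‖z‖ ^ (2 * α ⟨0, hm⟩) *
            Real.cos (2 * α ⟨0, hm⟩ * z.arg)) * t) +
        Real.exp ((‖B‖ - ‖z‖ ^ (2 * α ⟨m - 1, Nat.sub_lt hm one_pos⟩) *
            Real.cos (2 * α ⟨0, hm⟩ * z.arg)) * t) := by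
  classical
  set i0 : Fin m := ⟨0, hm⟩ with hi0
  set iL : Fin m := ⟨m - 1, Nat.sub_lt hm one_pos⟩ with hiL
  set c : ℝ := Real.cos (2 * α i0 * z.arg) with hc
  set a1 : ℝ := ‖z‖ ^ (2 * α i0) with ha1
  set am : ℝ := ‖z‖ ^ (2 * α iL) with ham
  set μ : ℝ := ‖B‖ - min a1 am * c with hμ
  set D : Matrix (Fin m) (Fin m) ℂ :=
    Matrix.diagonal (fun i => -z ^ (((2 * α i : ℝ)) : ℂ)) with hD
  set M : Matrix (Fin m) (Fin m) ℂ := D + B.map Complex.ofReal with hM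
  have hα1 : 0 < α i0 := (hα i0).1
  have hangle : 2 * α i0 * z.arg < Real.pi / 2 := by
    calc 2 * α i0 * z.arg < 2 * α i0 * (Real.pi / (4 * α i0)) := by
          exact mul_lt_mul_of_pos_left hz' (by positivity)
      _ = Real.pi / 2 := by field_simp; ring
  have hanonneg : 0 ≤ 2 * α i0 * z.arg := by positivity
  have hc0 : 0 ≤ c := by
    apply Real.cos_nonneg_of_mem_Icc
    constructor
    · linarith [Real.pi_pos]
    · linarith
  have hkey : ∀ i : Fin m, min a1 am * c ≤ (z ^ (((2 * α i : ℝ)) : ℂ)).re := by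
    intro i
    have hii0 : α i ≤ α i0 := hmono i0 i (by simp [hi0, Fin.le_def])
    have hiiL : α iL ≤ α i := hmono i iL (by
      simp [hiL, Fin.le_def]
      exact Nat.le_pred_of_lt i.isLt)
    have hαi : 0 < α i := (hα i).1
    by_cases hz0 : z = 0
    · subst hz0
      have h2 : ((2 * α i : ℝ) : ℂ) ≠ 0 := by
        exact_mod_cast (by positivity : (0:ℝ) < 2 * α i).ne'
      rw [Complex.zero_cpow h2]
      simp only [Complex.zero_re]
      have e1 : a1 = 0 := by
        rw [ha1, norm_zero, Real.zero_rpow (by positivity : (0:ℝ) < 2 * α i0).ne']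
      rw [e1]
      exact mul_nonpos_iff.mpr (Or.inr ⟨min_le_left 0 am, hc0⟩)
    · rw [aux_re_cpow z hz0]
      have h2 : c ≤ Real.cos (2 * α i * z.arg) := by
        apply Real.cos_le_cos_of_nonneg_of_le_pi (by positivity)
        · linarith [Real.pi_pos]
        · apply mul_le_mul_of_nonneg_right _ hz
          linarith
      have h1 : min a1 am ≤ ‖z‖ ^ (2 * α i) := by
        rcases le_total 1 (‖z‖) with hR | hR
        · exact le_trans (min_le_right _ _)
            (Real.rpow_le_rpow_of_exponent_le hR (by linarith))
        · exact le_trans (min_le_left _ _)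
            (Real.rpow_le_rpow_of_exponent_ge (norm_pos_iff.mpr hz0) hR (by linarith))
      exact mul_le_mul h1 h2 hc0 (Real.rpow_nonneg (norm_nonneg z) _)
  have hinner : ∀ x : EuclideanSpace ℂ (Fin m),
      (inner ℂ (Matrix.toEuclideanCLM (𝕜 := ℂ) M x) x : ℂ).re ≤ μ * ‖x‖ ^ 2 := by
    intro x
    have hadd : Matrix.toEuclideanCLM (𝕜 := ℂ) M x
        = Matrix.toEuclideanCLM (𝕜 := ℂ) D x
          + Matrix.toEuclideanCLM (𝕜 := ℂ) (B.map Complex.ofReal) x := by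
      rw [hM, map_add, ContinuousLinearMap.add_apply]
    rw [hadd, inner_add_left, Complex.add_re]
    have hDpart : (inner ℂ (Matrix.toEuclideanCLM (𝕜 := ℂ) D x) x : ℂ).re
        ≤ -(min a1 am * c) * ‖x‖ ^ 2 := by
      have hcoord : ∀ j, (Matrix.toEuclideanCLM (𝕜 := ℂ) D x) j
          = (-(z ^ (((2 * α j : ℝ)) : ℂ))) * x j := by
        intro j
        show (D *ᵥ (x : Fin m → ℂ)) j = _
        rw [hD]
        rw [Matrix.mulVec_diagonal]
      have hie : (inner ℂ (Matrix.toEuclideanCLM (𝕜 := ℂ) D x) x : ℂ)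
          = ∑ j, (starRingEnd ℂ) ((Matrix.toEuclideanCLM (𝕜 := ℂ) D x) j) * x j := by
        rw [PiLp.inner_apply]
        simp only [RCLike.inner_apply']
      rw [hie, Complex.re_sum]
      calc ∑ j, ((starRingEnd ℂ) ((Matrix.toEuclideanCLM (𝕜 := ℂ) D x) j) * x j).re
          ≤ ∑ j, (-(min a1 am * c)) * ‖x j‖ ^ 2 := by
            apply Finset.sum_le_sum
            intro j _
            rw [hcoord j, aux_conj_mul_re]
            apply mul_le_mul_of_nonneg_right _ (by positivity)
            rw [Complex.neg_re]
            exact neg_le_neg (hkey j)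
        _ = -(min a1 am * c) * ‖x‖ ^ 2 := by
            rw [← Finset.mul_sum, aux_norm_sq_eq]
    have hBpart : (inner ℂ (Matrix.toEuclideanCLM (𝕜 := ℂ)
        (B.map Complex.ofReal) x) x : ℂ).re ≤ ‖B‖ * ‖x‖ ^ 2 := by
      have h1 : (inner ℂ (Matrix.toEuclideanCLM (𝕜 := ℂ) (B.map Complex.ofReal) x) x : ℂ).re
          ≤ ‖(inner ℂ (Matrix.toEuclideanCLM (𝕜 := ℂ) (B.map Complex.ofReal) x) x : ℂ)‖ :=
        Complex.re_le_norm _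
      have h2 := norm_inner_le_norm (𝕜 := ℂ)
        (Matrix.toEuclideanCLM (𝕜 := ℂ) (B.map Complex.ofReal) x) x
      have h3 := aux_mulVec_ofReal B x
      calc (inner ℂ (Matrix.toEuclideanCLM (𝕜 := ℂ) (B.map Complex.ofReal) x) x : ℂ).re
          ≤ ‖Matrix.toEuclideanCLM (𝕜 := ℂ) (B.map Complex.ofReal) x‖ * ‖x‖ :=
            le_trans h1 h2
        _ ≤ (‖B‖ * ‖x‖) * ‖x‖ := mul_le_mul_of_nonneg_right h3 (norm_nonneg x)
        _ = ‖B‖ * ‖x‖ ^ 2 := by ring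
    refine le_trans (add_le_add hDpart hBpart) (le_of_eq ?_)
    rw [hμ]; ring
  have hmain := norm_exp_apply_le (Matrix.toEuclideanCLM (𝕜 := ℂ) M) μ hinner t ht
  rw [aux_norm_transfer M t]
  refine le_trans hmain ?_
  rcases min_cases a1 am with ⟨hmin, _⟩ | ⟨hmin, _⟩
  · rw [hμ, hmin]
    have : (0:ℝ) < Real.exp ((‖B‖ - am * c) * t) := Real.exp_pos _
    rw [ha1] at *
    linarith [Real.exp_pos ((‖B‖ - ‖z‖ ^ (2 * α iL) * c) * t),
      le_refl (Real.exp ((‖B‖ - ‖z‖ ^ (2 * α i0) * c) * t))]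
  · rw [hμ, hmin]
    linarith [Real.exp_pos ((‖B‖ - ‖z‖ ^ (2 * α i0) * c) * t),
      le_refl (Real.exp ((‖B‖ - ‖z‖ ^ (2 * α iL) * c) * t))]
end

section
/- Let d ≥ 1, α ∈ (0,1), B > 0, and suppose p : ℝᵈ → ℝ satisfies p(y) ≥ B⁻¹ t / (t^{d/(2α)+1} + |y|^{d+2α}) for all y ∈ ℝᵈ, where t ≥ 1 is fixed. Let u₀ : ℝᵈ → ℝ be continuous, nonnegative, and satisfy u₀(y) ≥ C₀ > 0 for all y in some ball B_R(ξ). Then there exists a constant c' > 0 (depending on C₀, R, ξ, B, d, α but not on t ≥ 1 or x) such that the convolution satisfies (p ∗ u₀)(x) ≥ c' t / (t^{d/(2α)+1} + |x|^{d+2α}) for all x ∈ ℝᵈ. -/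
open MeasureTheory

theorem convolution_algebraic_lower_bound (d : ℕ) (hd : 1 ≤ d) (α B R C₀ : ℝ)
    (hα : α ∈ Set.Ioo (0:ℝ) 1) (hB : 0 < B) (hR : 0 < R) (hC₀ : 0 < C₀)
    (ξ : EuclideanSpace ℝ (Fin d)) (u₀ : EuclideanSpace ℝ (Fin d) → ℝ)
    (hu₀c : Continuous u₀) (hu₀0 : ∀ y, 0 ≤ u₀ y)
    (hu₀ : ∀ y ∈ Metric.ball ξ R, C₀ ≤ u₀ y) :
    ∃ c' > (0:ℝ), ∀ t ≥ (1:ℝ), ∀ p : EuclideanSpace ℝ (Fin d) → ℝ,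
      (∀ y, B⁻¹ * t / (t ^ ((d:ℝ) / (2 * α) + 1) + ‖y‖ ^ ((d:ℝ) + 2 * α)) ≤ p y) →
      (∀ x, Integrable (fun y => p (x - y) * u₀ y)) →
      ∀ x, c' * t / (t ^ ((d:ℝ) / (2 * α) + 1) + ‖x‖ ^ ((d:ℝ) + 2 * α)) ≤
        ∫ y, p (x - y) * u₀ y := by
  obtain ⟨hα0, hα1⟩ := hα
  set β : ℝ := (d:ℝ) + 2 * α with hβdef
  have hβ : 0 < β := by positivity
  set M : ℝ := ‖ξ‖ + R with hMdef
  have hM : 0 < M := by positivity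
  set K : ℝ := 1 + 2 ^ β * (1 + M ^ β) with hKdef
  have h2β : (0:ℝ) < 2 ^ β := Real.rpow_pos_of_pos two_pos β
  have hMβ : (0:ℝ) < M ^ β := Real.rpow_pos_of_pos hM β
  have hK : 0 < K := by positivity
  set V : ℝ := (volume (Metric.ball ξ R)).toReal with hVdef
  have hV : 0 < V := by
    refine ENNReal.toReal_pos (Metric.measure_ball_pos volume ξ hR).ne' measure_ball_lt_top.ne
  refine ⟨C₀ * B⁻¹ * V / K, by positivity, ?_⟩
  intro t ht p hp hint x
  set γ : ℝ := (d:ℝ) / (2 * α) + 1 with hγdef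
  have ht0 : (0:ℝ) < t := lt_of_lt_of_le one_pos ht
  have hγ0 : (0:ℝ) < γ := by positivity
  have htγ : (1:ℝ) ≤ t ^ γ := Real.one_le_rpow ht hγ0.le
  have htγ0 : (0:ℝ) < t ^ γ := lt_of_lt_of_le one_pos htγ
  set X : ℝ := ‖x‖ ^ β with hXdef
  have hX : 0 ≤ X := Real.rpow_nonneg (norm_nonneg x) β
  set D₂ : ℝ := t ^ γ + (‖x‖ + M) ^ β with hD₂def
  have hD₂ : 0 < D₂ := by positivity
  -- pointwise lower bound on the ball
  have hpt : ∀ y ∈ Metric.ball ξ R, B⁻¹ * C₀ * t / D₂ ≤ p (x - y) * u₀ y := by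
    intro y hy
    have hny : ‖y‖ ≤ M := by
      have := mem_ball_iff_norm.mp hy
      calc ‖y‖ = ‖ξ + (y - ξ)‖ := by rw [add_sub_cancel]
        _ ≤ ‖ξ‖ + ‖y - ξ‖ := norm_add_le _ _
        _ ≤ ‖ξ‖ + R := by linarith
    have hnxy : ‖x - y‖ ≤ ‖x‖ + M := by
      calc ‖x - y‖ ≤ ‖x‖ + ‖y‖ := norm_sub_le _ _
        _ ≤ ‖x‖ + M := by linarith
    have hden : t ^ γ + ‖x - y‖ ^ β ≤ D₂ := by
      have := Real.rpow_le_rpow (norm_nonneg (x - y)) hnxy hβ.le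
      simpa [hD₂def] using add_le_add_left this (t ^ γ)
    have hden0 : (0:ℝ) < t ^ γ + ‖x - y‖ ^ β := by positivity
    have h1 : B⁻¹ * t / D₂ ≤ p (x - y) := by
      refine le_trans ?_ (hp (x - y))
      exact div_le_div_of_nonneg_left (by positivity) hden0 hden
    have h1' : (0:ℝ) ≤ B⁻¹ * t / D₂ := by positivity
    calc B⁻¹ * C₀ * t / D₂ = (B⁻¹ * t / D₂) * C₀ := by ring
      _ ≤ p (x - y) * u₀ y :=
        mul_le_mul h1 (hu₀ y hy) hC₀.le (le_trans h1' h1)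
  -- integral over the ball
  have hball : B⁻¹ * C₀ * t / D₂ * V ≤ ∫ y in Metric.ball ξ R, p (x - y) * u₀ y := by
    have := setIntegral_ge_of_const_le measurableSet_ball measure_ball_lt_top.ne hpt
      ((hint x).integrableOn)
    rw [smul_eq_mul, mul_comm] at this
    exact this
  have hnonneg : 0 ≤ᵐ[volume] fun y => p (x - y) * u₀ y := by
    refine Filter.Eventually.of_forall fun y => ?_
    have hp0 : (0:ℝ) ≤ p (x - y) := by
      refine le_trans ?_ (hp (x - y))
      positivity
    exact mul_nonneg hp0 (hu₀0 y)
  have hle : ∫ y in Metric.ball ξ R, p (x - y) * u₀ y ≤ ∫ y, p (x - y) * u₀ y :=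
    setIntegral_le_integral (hint x) hnonneg
  -- final arithmetic
  have hkey : D₂ ≤ K * (t ^ γ + X) := by
    have hmax : ‖x‖ + M ≤ 2 * max ‖x‖ M := by
      have := le_max_left ‖x‖ M
      have := le_max_right ‖x‖ M
      linarith
    have h2 : (‖x‖ + M) ^ β ≤ 2 ^ β * (X + M ^ β) := by
      calc (‖x‖ + M) ^ β ≤ (2 * max ‖x‖ M) ^ β :=
            Real.rpow_le_rpow (by positivity) hmax hβ.le
        _ = 2 ^ β * (max ‖x‖ M) ^ β := Real.mul_rpow (by norm_num) (le_max_of_le_right hM.le)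
        _ ≤ 2 ^ β * (X + M ^ β) := by
            gcongr
            rcases max_cases ‖x‖ M with ⟨h, _⟩ | ⟨h, _⟩ <;> rw [h]
            · linarith [hMβ]
            · linarith [hX]
    have h3 : M ^ β ≤ M ^ β * t ^ γ := le_mul_of_one_le_right hMβ.le htγ
    rw [hD₂def, hKdef]
    nlinarith [mul_nonneg h2β.le hX, mul_nonneg (mul_nonneg h2β.le hMβ.le) hX]
  calc (C₀ * B⁻¹ * V / K) * t / (t ^ γ + X)
      = (C₀ * B⁻¹ * V * t) / (K * (t ^ γ + X)) := by
        rw [div_mul_eq_mul_div, div_div]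
    _ ≤ (C₀ * B⁻¹ * V * t) / D₂ :=
        div_le_div_of_nonneg_left (by positivity) hD₂ hkey
    _ = B⁻¹ * C₀ * t / D₂ * V := by ring
    _ ≤ ∫ y in Metric.ball ξ R, p (x - y) * u₀ y := hball
    _ ≤ ∫ y, p (x - y) * u₀ y := hle
end
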